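/- Let τ, γ, λ > 0, U ∈ ℝ^{p×n}, V ∈ ℝ^{p×m}, and define Ψ(W) := (τ/2)‖U − VW‖² + (γ/2)‖W‖² for W ∈ ℝ^{m×n}. If W* satisfies W* ∈ Prox_{βλ‖·‖_{0,2}}(W* − β∇Ψ(W*)) for some β ≥ 1/γ, then W* is a global minimizer of Ψ(W) + λ‖W‖_{0,2} over ℝ^{m×n}. -/

import Mathlib

set_option autoImplicit false

open Matrix

/-- Squared Frobenius norm of a matrix. -/
noncomputable def frobSq {m n : ℕ} (W : Matrix (Fin m) (Fin n) ℝ) : ℝ :=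
  ∑ i, ∑ j, (W i j) ^ 2

/-- Frobenius norm of a matrix. -/
noncomputable def frobNorm {m n : ℕ} (W : Matrix (Fin m) (Fin n) ℝ) : ℝ :=
  Real.sqrt (frobSq W)

open Classical in
/-- `‖W‖_{0,2}`: the number of nonzero rows of `W`, as a real number. -/
noncomputable def norm02 {m n : ℕ} (W : Matrix (Fin m) (Fin n) ℝ) : ℝ :=
  ((Finset.univ.filter fun s : Fin m => W s ≠ 0).card : ℝ)

/-- The proximal operator (as a set of global minimizers):
`Prox_β G (H) = argmin_W { G(W) + (1/(2β))‖W − H‖² }`. -/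
def ProxSet {m n : ℕ} (β : ℝ) (G : Matrix (Fin m) (Fin n) ℝ → ℝ)
    (H : Matrix (Fin m) (Fin n) ℝ) : Set (Matrix (Fin m) (Fin n) ℝ) :=
  {W | ∀ Z : Matrix (Fin m) (Fin n) ℝ,
    G W + (1 / (2 * β)) * frobSq (W - H) ≤ G Z + (1 / (2 * β)) * frobSq (Z - H)}

/-- The objective `Ψ(W) = (τ/2)‖U − VW‖² + (γ/2)‖W‖²`. -/
noncomputable def Psi {p m n : ℕ} (τ γ : ℝ) (U : Matrix (Fin p) (Fin n) ℝ)
    (V : Matrix (Fin p) (Fin m) ℝ) (W : Matrix (Fin m) (Fin n) ℝ) : ℝ :=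
  (τ / 2) * frobSq (U - V * W) + (γ / 2) * frobSq W

/-- The gradient of `Ψ`, namely `∇Ψ(W) = τ Vᵀ(VW − U) + γ W`. -/
noncomputable def gradPsi {p m n : ℕ} (τ γ : ℝ) (U : Matrix (Fin p) (Fin n) ℝ)
    (V : Matrix (Fin p) (Fin m) ℝ) (W : Matrix (Fin m) (Fin n) ℝ) :
    Matrix (Fin m) (Fin n) ℝ :=
  τ • (Vᵀ * (V * W - U)) + γ • W

/-- The spectral norm `‖V‖₂` of a matrix (largest singular value): the operator norm
of the induced linear map between Euclidean spaces. -/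
noncomputable def specNorm {p m : ℕ} (V : Matrix (Fin p) (Fin m) ℝ) : ℝ :=
  ‖LinearMap.toContinuousLinearMap (Matrix.toEuclideanLin V)‖


noncomputable def frobInner {m n : ℕ} (A B : Matrix (Fin m) (Fin n) ℝ) : ℝ :=
  ∑ i, ∑ j, A i j * B i j

lemma frobSq_nonneg {m n : ℕ} (A : Matrix (Fin m) (Fin n) ℝ) : 0 ≤ frobSq A := by
  apply Finset.sum_nonneg; intro i _; apply Finset.sum_nonneg; intro j _; positivity

lemma frobSq_add {m n : ℕ} (A B : Matrix (Fin m) (Fin n) ℝ) :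
    frobSq (A + B) = frobSq A + 2 * frobInner A B + frobSq B := by
  simp only [frobSq, frobInner, Matrix.add_apply, Finset.mul_sum, ← Finset.sum_add_distrib]
  apply Finset.sum_congr rfl; intro i _
  apply Finset.sum_congr rfl; intro j _; ring

lemma frobSq_neg {m n : ℕ} (A : Matrix (Fin m) (Fin n) ℝ) : frobSq (-A) = frobSq A := by
  simp only [frobSq, Matrix.neg_apply]
  apply Finset.sum_congr rfl; intro i _
  apply Finset.sum_congr rfl; intro j _; ring

lemma frobInner_neg_right {m n : ℕ} (A B : Matrix (Fin m) (Fin n) ℝ) :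
    frobInner A (-B) = - frobInner A B := by
  simp only [frobInner, Matrix.neg_apply, ← Finset.sum_neg_distrib]
  apply Finset.sum_congr rfl; intro i _
  apply Finset.sum_congr rfl; intro j _; ring

lemma frobSq_sub {m n : ℕ} (A B : Matrix (Fin m) (Fin n) ℝ) :
    frobSq (A - B) = frobSq A - 2 * frobInner A B + frobSq B := by
  rw [sub_eq_add_neg, frobSq_add, frobSq_neg, frobInner_neg_right]; ring

lemma frobSq_smul {m n : ℕ} (c : ℝ) (A : Matrix (Fin m) (Fin n) ℝ) :
    frobSq (c • A) = c ^ 2 * frobSq A := by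
  simp only [frobSq, Matrix.smul_apply, smul_eq_mul, Finset.mul_sum]
  apply Finset.sum_congr rfl; intro i _
  apply Finset.sum_congr rfl; intro j _; ring

lemma frobInner_smul_left {m n : ℕ} (c : ℝ) (A B : Matrix (Fin m) (Fin n) ℝ) :
    frobInner (c • A) B = c * frobInner A B := by
  simp only [frobInner, Matrix.smul_apply, smul_eq_mul, Finset.mul_sum]
  apply Finset.sum_congr rfl; intro i _
  apply Finset.sum_congr rfl; intro j _; ring

lemma frobInner_add_left {m n : ℕ} (A B C : Matrix (Fin m) (Fin n) ℝ) :
    frobInner (A + B) C = frobInner A C + frobInner B C := by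
  simp only [frobInner, Matrix.add_apply, ← Finset.sum_add_distrib]
  apply Finset.sum_congr rfl; intro i _
  apply Finset.sum_congr rfl; intro j _; ring

lemma frobInner_eq_trace {m n : ℕ} (A B : Matrix (Fin m) (Fin n) ℝ) :
    frobInner A B = Matrix.trace (Aᵀ * B) := by
  simp only [frobInner, Matrix.trace, Matrix.diag, Matrix.mul_apply, Matrix.transpose_apply]
  rw [Finset.sum_comm]

lemma frobInner_transpose_mul {p m n : ℕ} (V : Matrix (Fin p) (Fin m) ℝ)
    (X : Matrix (Fin p) (Fin n) ℝ) (D : Matrix (Fin m) (Fin n) ℝ) :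
    frobInner (Vᵀ * X) D = frobInner X (V * D) := by
  rw [frobInner_eq_trace, frobInner_eq_trace, Matrix.transpose_mul, Matrix.transpose_transpose,
    Matrix.mul_assoc]

lemma frobInner_neg_left {m n : ℕ} (A B : Matrix (Fin m) (Fin n) ℝ) :
    frobInner (-A) B = - frobInner A B := by
  simp only [frobInner, Matrix.neg_apply, ← Finset.sum_neg_distrib]
  apply Finset.sum_congr rfl; intro i _
  apply Finset.sum_congr rfl; intro j _; ring

lemma frobInner_comm {m n : ℕ} (A B : Matrix (Fin m) (Fin n) ℝ) :
    frobInner A B = frobInner B A := by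
  simp only [frobInner]
  apply Finset.sum_congr rfl; intro i _
  apply Finset.sum_congr rfl; intro j _; ring

lemma frobInner_smul_right {m n : ℕ} (c : ℝ) (A B : Matrix (Fin m) (Fin n) ℝ) :
    frobInner A (c • B) = c * frobInner A B := by
  rw [frobInner_comm, frobInner_smul_left, frobInner_comm]

/-- a P-stationary point `W*` of `Ψ(W) + λ‖W‖_{0,2}` with `β ≥ 1/γ` is
a global minimizer of `Ψ(W) + λ‖W‖_{0,2}` over `ℝ^{m×n}`. -/
theorem pStationary_is_global_minimizer
    (p m n : ℕ) (τ γ lam β : ℝ) (hτ : 0 < τ) (hγ : 0 < γ) (hlam : 0 < lam)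
    (hβ : β ≥ 1 / γ)
    (U : Matrix (Fin p) (Fin n) ℝ) (V : Matrix (Fin p) (Fin m) ℝ)
    (Wstar : Matrix (Fin m) (Fin n) ℝ)
    (hP : Wstar ∈ ProxSet β (fun W => lam * norm02 W)
        (Wstar - β • gradPsi τ γ U V Wstar)) :
    ∀ W : Matrix (Fin m) (Fin n) ℝ,
      Psi τ γ U V Wstar + lam * norm02 Wstar ≤ Psi τ γ U V W + lam * norm02 W := by
  intro W
  have hβpos : 0 < β := lt_of_lt_of_le (by positivity) hβ
  have hβγ : 1 ≤ β * γ := by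
    have := (div_le_iff₀ hγ).mp hβ
    linarith
  set g : Matrix (Fin m) (Fin n) ℝ := gradPsi τ γ U V Wstar with hg
  set D : Matrix (Fin m) (Fin n) ℝ := W - Wstar with hDdef
  have hUV : U - V * W = (U - V * Wstar) - V * D := by
    rw [hDdef, Matrix.mul_sub]; abel
  have hWeq : W = Wstar + D := by rw [hDdef]; abel
  have hginner : frobInner g D =
      τ * frobInner (V * Wstar - U) (V * D) + γ * frobInner Wstar D := by
    rw [hg, gradPsi, frobInner_add_left, frobInner_smul_left, frobInner_smul_left,
      frobInner_transpose_mul]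
  have hneg : frobInner (U - V * Wstar) (V * D)
      = - frobInner (V * Wstar - U) (V * D) := by
    rw [← neg_sub, frobInner_neg_left]
  have hexp : Psi τ γ U V W = Psi τ γ U V Wstar + frobInner g D
      + (τ / 2) * frobSq (V * D) + (γ / 2) * frobSq D := by
    rw [Psi, Psi, hUV, frobSq_sub]
    rw [hWeq]
    rw [frobSq_add, hginner, hneg]
    ring
  have hP' := hP W
  simp only at hP'
  have h1 : Wstar - (Wstar - β • g) = β • g := by abel
  have h2 : W - (Wstar - β • g) = D + β • g := by rw [hDdef]; abel
  rw [h1, h2, frobSq_add, frobSq_smul, frobInner_smul_right] at hP'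
  have hkey : lam * norm02 Wstar ≤ lam * norm02 W
      + (1 / (2 * β)) * frobSq D + frobInner D g := by
    have e : (1 / (2 * β)) * (frobSq D + 2 * (β * frobInner D g) + β ^ 2 * frobSq g)
        = (1 / (2 * β)) * frobSq D + frobInner D g + (1 / (2 * β)) * (β ^ 2 * frobSq g) := by
      field_simp
    rw [e] at hP'
    linarith
  have hSD := frobSq_nonneg D
  have hSVD := frobSq_nonneg (V * D)
  have hcoef : (1 / (2 * β)) * frobSq D ≤ (γ / 2) * frobSq D := by
    apply mul_le_mul_of_nonneg_right _ hSD
    rw [div_le_div_iff₀ (by positivity) (by norm_num)]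
    nlinarith
  have hDg : frobInner D g = frobInner g D := frobInner_comm _ _
  rw [hexp]
  nlinarith [mul_nonneg (le_of_lt (half_pos hτ)) hSVD]
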